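/- A set S ⊆ V(G) is a redundant locating-dominating set if and only if the following three conditions hold: (i) for all v ∈ V(G), |N[v] ∩ S| ≥ 2; (ii) for all v ∈ S and u ∈ V(G) \ S, |((N(v) ∩ S) △ (N(u) ∩ S)) \ {v}| ≥ 1; (iii) for all distinct u, v ∈ V(G) \ S, |(N(v) ∩ S) △ (N(u) ∩ S)| ≥ 2. -/

import Mathlib

open scoped symmDiff

/-- A locating-dominating (LD) set: every non-detector is dominated, and
distinct non-detectors have distinct neighborhood traces on `S`. -/
def IsLDSet {V : Type*} (G : SimpleGraph V) (S : Set V) : Prop :=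
  (∀ v ∉ S, (G.neighborSet v ∩ S).Nonempty) ∧
    ∀ u ∉ S, ∀ v ∉ S, u ≠ v → G.neighborSet u ∩ S ≠ G.neighborSet v ∩ S

/-- A redundant locating-dominating (RED:LD) set. -/
def IsRedLDSet {V : Type*} (G : SimpleGraph V) (S : Set V) : Prop :=
  IsLDSet G S ∧ ∀ v ∈ S, IsLDSet G (S \ {v})

/-- A leaf is a vertex of degree 1. -/
def IsLeaf {V : Type*} (G : SimpleGraph V) (v : V) : Prop :=
  (G.neighborSet v).ncard = 1

/-- A support vertex is a vertex adjacent to a leaf. -/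
def IsSupport {V : Type*} (G : SimpleGraph V) (v : V) : Prop :=
  ∃ u, G.Adj v u ∧ IsLeaf G u

lemma trace_diff {V : Type*} (G : SimpleGraph V) (S : Set V) (x v : V) :
    G.neighborSet x ∩ (S \ {v}) = (G.neighborSet x ∩ S) \ {v} := by
  ext y; simp [Set.mem_diff]; tauto

lemma diff_symmDiff_diff {V : Type*} (A B : Set V) (v : V) :
    (A \ {v}) ∆ (B \ {v}) = (A ∆ B) \ {v} := by
  ext x; simp [Set.mem_symmDiff, Set.mem_diff]; tauto

theorem stmt3 {V : Type*} [Fintype V] (G : SimpleGraph V) (S : Set V) :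
    IsRedLDSet G S ↔
      ((∀ v : V, 2 ≤ ((insert v (G.neighborSet v)) ∩ S).ncard) ∧
       (∀ v ∈ S, ∀ u ∉ S,
          1 ≤ (((G.neighborSet v ∩ S) ∆ (G.neighborSet u ∩ S)) \ {v}).ncard) ∧
       (∀ u ∉ S, ∀ v ∉ S, u ≠ v →
          2 ≤ ((G.neighborSet v ∩ S) ∆ (G.neighborSet u ∩ S)).ncard)) := by
  constructor
  · rintro ⟨⟨hdom, hsep⟩, hred⟩
    refine ⟨?_, ?_, ?_⟩
    · intro v
      by_cases hv : v ∈ S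
      · have hv' : v ∉ S \ {v} := by simp
        obtain ⟨w, hw⟩ := (hred v hv).1 v hv'
        refine (Set.one_lt_ncard (Set.toFinite _)).2 ⟨v, ?_, w, ?_, ?_⟩
        · exact ⟨Set.mem_insert _ _, hv⟩
        · exact ⟨Set.mem_insert_of_mem _ hw.1, hw.2.1⟩
        · rintro rfl; exact hw.2.2 rfl
      · obtain ⟨w, hw⟩ := hdom v hv
        have hw' : w ∈ S := hw.2
        have hv2 : v ∉ S \ {w} := fun h => hv h.1
        obtain ⟨z, hz⟩ := (hred w hw').1 v hv2
        refine (Set.one_lt_ncard (Set.toFinite _)).2 ⟨w, ?_, z, ?_, ?_⟩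
        · exact ⟨Set.mem_insert_of_mem _ hw.1, hw.2⟩
        · exact ⟨Set.mem_insert_of_mem _ hz.1, hz.2.1⟩
        · rintro rfl; exact hz.2.2 rfl
    · intro v hv u hu
      have hv' : v ∉ S \ {v} := by simp
      have hu' : u ∉ S \ {v} := fun h => hu h.1
      have hne : v ≠ u := fun h => hu (h ▸ hv)
      have hth := (hred v hv).2 v hv' u hu' hne
      rw [trace_diff, trace_diff] at hth
      have hne2 : ((G.neighborSet v ∩ S) \ {v}) ∆ ((G.neighborSet u ∩ S) \ {v}) ≠ ∅ := by
        rw [← Set.bot_eq_empty, Ne, symmDiff_eq_bot]; exact hth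
      rw [diff_symmDiff_diff] at hne2
      have hne3 : (((G.neighborSet v ∩ S) ∆ (G.neighborSet u ∩ S)) \ {v}).Nonempty :=
        Set.nonempty_iff_ne_empty.2 hne2
      exact (Set.ncard_pos (Set.toFinite _)).2 hne3
    · intro u hu v hv huv
      have h1 : G.neighborSet v ∩ S ≠ G.neighborSet u ∩ S := hsep v hv u hu (Ne.symm huv)
      have h2 : ((G.neighborSet v ∩ S) ∆ (G.neighborSet u ∩ S)).Nonempty := by
        rw [Set.nonempty_iff_ne_empty, ← Set.bot_eq_empty, Ne, symmDiff_eq_bot]; exact h1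
      obtain ⟨w, hw⟩ := h2
      have hwS : w ∈ S := by
        rcases Set.mem_symmDiff.1 hw with ⟨⟨_, h⟩, _⟩ | ⟨⟨_, h⟩, _⟩ <;> exact h
      have hu' : u ∉ S \ {w} := fun h => hu h.1
      have hv' : v ∉ S \ {w} := fun h => hv h.1
      have hth := (hred w hwS).2 v hv' u hu' (Ne.symm huv)
      rw [trace_diff, trace_diff] at hth
      have hne2 : (((G.neighborSet v ∩ S) ∆ (G.neighborSet u ∩ S)) \ {w}).Nonempty := by
        rw [← diff_symmDiff_diff, Set.nonempty_iff_ne_empty, ← Set.bot_eq_empty, Ne,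
          symmDiff_eq_bot]
        exact hth
      obtain ⟨z, hz⟩ := hne2
      refine (Set.one_lt_ncard (Set.toFinite _)).2 ⟨w, hw, z, hz.1, ?_⟩
      rintro rfl; exact hz.2 rfl
  · rintro ⟨h1, h2, h3⟩
    have hLD : IsLDSet G S := by
      constructor
      · intro u hu
        have hc := h1 u
        have hsub : (insert u (G.neighborSet u)) ∩ S ⊆ G.neighborSet u ∩ S := by
          rintro x ⟨hx, hxS⟩
          rcases hx with rfl | hx
          · exact absurd hxS hu
          · exact ⟨hx, hxS⟩
        have hc2 : 2 ≤ (G.neighborSet u ∩ S).ncard :=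
          le_trans hc (Set.ncard_le_ncard hsub (Set.toFinite _))
        exact (Set.ncard_pos (Set.toFinite _)).1 (by omega)
      · intro u hu v hv huv heq
        have hc := h3 u hu v hv huv
        rw [heq, symmDiff_self] at hc
        simp at hc
    refine ⟨hLD, fun v hv => ⟨?_, ?_⟩⟩
    · intro u hu
      rw [trace_diff]
      by_cases huS : u ∈ S
      · have hu_eq : u = v := by
          by_contra h
          exact hu ⟨huS, h⟩
        subst hu_eq
        have hc := h1 u
        have heq : (insert u (G.neighborSet u)) ∩ S = insert u (G.neighborSet u ∩ S) := by
          rw [Set.insert_inter_of_mem huS]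
        rw [heq] at hc
        have hcard : 1 ≤ (G.neighborSet u ∩ S).ncard := by
          have := Set.ncard_insert_le u (G.neighborSet u ∩ S)
          omega
        have hne : (G.neighborSet u ∩ S).Nonempty :=
          (Set.ncard_pos (Set.toFinite _)).1 hcard
        obtain ⟨w, hw⟩ := hne
        refine ⟨w, hw, ?_⟩
        rintro rfl
        exact G.irrefl hw.1
      · have hc := h1 u
        have hsub : (insert u (G.neighborSet u)) ∩ S ⊆ G.neighborSet u ∩ S := by
          rintro x ⟨hx, hxS⟩
          rcases hx with rfl | hx
          · exact absurd hxS huS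
          · exact ⟨hx, hxS⟩
        have h2c : 2 ≤ (G.neighborSet u ∩ S).ncard :=
          le_trans hc (Set.ncard_le_ncard hsub (Set.toFinite _))
        obtain ⟨b, hb, hbv⟩ := Set.exists_ne_of_one_lt_ncard (lt_of_lt_of_le one_lt_two h2c) v
        exact ⟨b, hb, hbv⟩
    · intro u hu w hw huw heq
      rw [trace_diff, trace_diff] at heq
      have hsd : (((G.neighborSet u ∩ S) ∆ (G.neighborSet w ∩ S)) \ {v}) = ∅ := by
        rw [← diff_symmDiff_diff, heq, symmDiff_self]
        simp
      by_cases huS : u ∈ S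
      · have huv : u = v := by by_contra h; exact hu ⟨huS, h⟩
        subst huv
        have hwS : w ∉ S := by
          intro hwS
          have hwu : w = u := by by_contra h; exact hw ⟨hwS, h⟩
          exact huw hwu.symm
        have hc := h2 u huS w hwS
        rw [hsd] at hc
        simp at hc
      · by_cases hwS : w ∈ S
        · have hwv : w = v := by by_contra h; exact hw ⟨hwS, h⟩
          subst hwv
          have hc := h2 w hwS u huS
          have hcomm : ((G.neighborSet w ∩ S) ∆ (G.neighborSet u ∩ S)) =
              ((G.neighborSet u ∩ S) ∆ (G.neighborSet w ∩ S)) := symmDiff_comm _ _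
          rw [hcomm, hsd] at hc
          simp at hc
        · have hc := h3 u huS w hwS huw
          have h2c : 2 ≤ ((G.neighborSet u ∩ S) ∆ (G.neighborSet w ∩ S)).ncard := by
            rwa [symmDiff_comm]
          have hsub : ((G.neighborSet u ∩ S) ∆ (G.neighborSet w ∩ S)) ⊆ {v} := by
            intro x hx
            by_contra h
            exact absurd (Set.mem_diff_of_mem hx h) (hsd ▸ Set.notMem_empty x)
          have hle := Set.ncard_le_ncard hsub (Set.toFinite _)
          rw [Set.ncard_singleton] at hle
          omega
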